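/- Let V : L^1([0,1]) → C([0,1]) be the Volterra operator. Then the essential norm of V equals 1/2, i.e. inf{‖V − S‖ : S : L^1([0,1]) → C([0,1]) a compact bounded linear operator} = 1/2. -/

import Mathlib

open MeasureTheory Set

/-- Lebesgue measure restricted to `[0,1]`. -/
noncomputable def mu01 : Measure ℝ := volume.restrict (Icc (0:ℝ) 1)


lemma inv_succ_le_one (n : ℕ) : ((n:ℝ)+1)⁻¹ ≤ 1 := by
  rw [inv_le_one_iff₀]; right; simp

lemma inv_succ_pos (n : ℕ) : (0:ℝ) < ((n:ℝ)+1)⁻¹ := by positivity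

lemma mu01_Ioc {a : ℝ} (h1 : a ≤ 1) : mu01 (Ioc 0 a) = ENNReal.ofReal a := by
  rw [mu01, Measure.restrict_apply measurableSet_Ioc,
    inter_eq_left.mpr (Ioc_subset_Icc_self.trans (Icc_subset_Icc le_rfl h1)),
    Real.volume_Ioc, sub_zero]

noncomputable def bump (n : ℕ) : Lp ℝ 1 mu01 :=
  indicatorConstLp 1 measurableSet_Ioc
    (by rw [mu01_Ioc (inv_succ_le_one n)]; exact ENNReal.ofReal_ne_top)
    ((n:ℝ)+1)

lemma bump_norm (n : ℕ) : ‖bump n‖ = 1 := by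
  rw [bump, norm_indicatorConstLp one_ne_zero ENNReal.one_ne_top,
    measureReal_def, mu01_Ioc (inv_succ_le_one n)]
  simp [ENNReal.toReal_ofReal (inv_succ_pos n).le, Real.norm_eq_abs,
    abs_of_nonneg (by positivity : (0:ℝ) ≤ (n:ℝ)+1),
    mul_inv_cancel₀ (by positivity : ((n:ℝ)+1) ≠ 0)]

lemma bump_integral (n : ℕ) :
    ∫ t in Ioc (0:ℝ) ((n:ℝ)+1)⁻¹, (bump n : ℝ → ℝ) t ∂mu01 = 1 := by
  have h1 : ∫ t in Ioc (0:ℝ) ((n:ℝ)+1)⁻¹, (bump n : ℝ → ℝ) t ∂mu01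
      = ∫ t in Ioc (0:ℝ) ((n:ℝ)+1)⁻¹,
          (Ioc (0:ℝ) ((n:ℝ)+1)⁻¹).indicator (fun _ => ((n:ℝ)+1)) t ∂mu01 :=
    setIntegral_congr_ae measurableSet_Ioc <| by
      filter_upwards [indicatorConstLp_coeFn (μ := mu01) (p := 1)
        (hs := measurableSet_Ioc)
        (hμs := by rw [mu01_Ioc (inv_succ_le_one n)]; exact ENNReal.ofReal_ne_top)
        (c := ((n:ℝ)+1))] with t ht _
      exact ht
  rw [h1, setIntegral_congr_fun measurableSet_Ioc
      (fun t ht => indicator_of_mem ht _), setIntegral_const,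
    measureReal_def, mu01_Ioc (inv_succ_le_one n), ENNReal.toReal_ofReal (inv_succ_pos n).le,
    smul_eq_mul]
  field_simp

noncomputable def S0 : Lp ℝ 1 mu01 →L[ℝ] C(Icc (0:ℝ) 1, ℝ) :=
  (L1.integralCLM).smulRight (ContinuousMap.const (Icc (0:ℝ) 1) (1/2 : ℝ))

lemma S0_apply (f : Lp ℝ 1 mu01) (x : Icc (0:ℝ) 1) :
    S0 f x = (1/2) * ∫ a, (f : ℝ → ℝ) a ∂mu01 := by
  have : L1.integralCLM f = ∫ a, (f : ℝ → ℝ) a ∂mu01 := by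
    rw [← L1.integral_eq, L1.integral_eq_integral]
  simp [S0, this, smul_eq_mul, mul_comm]

lemma upper_bound (V : Lp ℝ 1 mu01 →L[ℝ] C(Icc (0:ℝ) 1, ℝ))
    (hV : ∀ (f : Lp ℝ 1 mu01) (x : Icc (0:ℝ) 1),
      V f x = ∫ t in Ioc (0:ℝ) (x:ℝ), (f : ℝ → ℝ) t ∂mu01) :
    ‖V - S0‖ ≤ 1/2 := by
  refine ContinuousLinearMap.opNorm_le_bound _ (by norm_num) fun f => ?_
  rw [ContinuousLinearMap.sub_apply]
  refine (ContinuousMap.norm_le _ (by positivity)).mpr fun x => ?_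
  rw [ContinuousMap.sub_apply, hV, S0_apply]
  have hInt : Integrable (f : ℝ → ℝ) mu01 := L1.integrable_coeFn f
  have hsplit : (∫ t in Ioc (0:ℝ) (x:ℝ), (f : ℝ → ℝ) t ∂mu01)
      + ∫ t in (Ioc (0:ℝ) (x:ℝ))ᶜ, (f : ℝ → ℝ) t ∂mu01
      = ∫ a, (f : ℝ → ℝ) a ∂mu01 :=
    integral_add_compl measurableSet_Ioc hInt
  have hsplit' : (∫ t in Ioc (0:ℝ) (x:ℝ), ‖(f : ℝ → ℝ) t‖ ∂mu01)
      + ∫ t in (Ioc (0:ℝ) (x:ℝ))ᶜ, ‖(f : ℝ → ℝ) t‖ ∂mu01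
      = ∫ a, ‖(f : ℝ → ℝ) a‖ ∂mu01 :=
    integral_add_compl measurableSet_Ioc hInt.norm
  have h1 : ‖∫ t in Ioc (0:ℝ) (x:ℝ), (f : ℝ → ℝ) t ∂mu01‖
      ≤ ∫ t in Ioc (0:ℝ) (x:ℝ), ‖(f : ℝ → ℝ) t‖ ∂mu01 :=
    norm_integral_le_integral_norm _
  have h2 : ‖∫ t in (Ioc (0:ℝ) (x:ℝ))ᶜ, (f : ℝ → ℝ) t ∂mu01‖
      ≤ ∫ t in (Ioc (0:ℝ) (x:ℝ))ᶜ, ‖(f : ℝ → ℝ) t‖ ∂mu01 :=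
    norm_integral_le_integral_norm _
  have hnorm : ‖f‖ = ∫ a, ‖(f : ℝ → ℝ) a‖ ∂mu01 := L1.norm_eq_integral_norm f
  rw [Real.norm_eq_abs] at h1 h2 ⊢
  rw [abs_le] at h1 h2 ⊢
  constructor <;> [linarith [h1.1, h2.2]; linarith [h1.2, h2.1]]

lemma S0_compact : IsCompactOperator ⇑S0 := by
  refine ⟨(fun t : ℝ => t • ContinuousMap.const (Icc (0:ℝ) 1) (1/2 : ℝ)) ''
      Metric.closedBall 0 ‖(L1.integralCLM (α := ℝ) (μ := mu01) (E := ℝ))‖,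
    (isCompact_closedBall 0 _).image (by fun_prop), ?_⟩
  refine Filter.mem_of_superset (Metric.closedBall_mem_nhds 0 one_pos) fun f hf => ?_
  refine ⟨L1.integralCLM f, ?_, rfl⟩
  simp only [Metric.mem_closedBall, dist_zero_right] at hf ⊢
  calc ‖L1.integralCLM f‖ ≤ ‖(L1.integralCLM (α := ℝ) (μ := mu01) (E := ℝ))‖ * ‖f‖ :=
        ContinuousLinearMap.le_opNorm _ _
    _ ≤ _ := by nlinarith [norm_nonneg (L1.integralCLM (α := ℝ) (μ := mu01) (E := ℝ)), norm_nonneg f]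

noncomputable def pt0 : Icc (0:ℝ) 1 := ⟨0, by norm_num⟩
noncomputable def ptn (n : ℕ) : Icc (0:ℝ) 1 := ⟨((n:ℝ)+1)⁻¹, ⟨(inv_succ_pos n).le, inv_succ_le_one n⟩⟩

lemma lower_bound (V : Lp ℝ 1 mu01 →L[ℝ] C(Icc (0:ℝ) 1, ℝ))
    (hV : ∀ (f : Lp ℝ 1 mu01) (x : Icc (0:ℝ) 1),
      V f x = ∫ t in Ioc (0:ℝ) (x:ℝ), (f : ℝ → ℝ) t ∂mu01)
    (S : Lp ℝ 1 mu01 →L[ℝ] C(Icc (0:ℝ) 1, ℝ)) (hS : IsCompactOperator ⇑S) :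
    1/2 ≤ ‖V - S‖ := by
  obtain ⟨K, hK, hKmem⟩ := hS
  obtain ⟨ε, hε, hball⟩ := Metric.mem_nhds_iff.mp hKmem
  set δ : ℝ := ε/2 with hδdef
  have hδ : 0 < δ := by positivity
  have hmem : ∀ n, S (δ • bump n) ∈ K := by
    intro n
    apply hball
    rw [Metric.mem_ball, dist_zero_right, norm_smul, bump_norm, Real.norm_eq_abs,
      abs_of_pos hδ, mul_one]
    linarith
  obtain ⟨k, _, φ, hφ, hconv⟩ := hK.tendsto_subseq hmem
  set y : C(Icc (0:ℝ) 1, ℝ) := δ⁻¹ • k with hy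
  have hSy : Filter.Tendsto (fun j => S (bump (φ j))) Filter.atTop (nhds y) := by
    have h2 := hconv.const_smul δ⁻¹
    convert h2 using 2 with j
    simp only [Function.comp_apply]
    rw [S.map_smul, smul_smul, inv_mul_cancel₀ hδ.ne', one_smul]
  have hpt : Filter.Tendsto (fun j => ptn (φ j)) Filter.atTop (nhds pt0) := by
    rw [tendsto_subtype_rng]
    have h0 := (tendsto_one_div_add_atTop_nhds_zero_nat (𝕜 := ℝ)).comp hφ.tendsto_atTop
    simpa [Function.comp_def, one_div, ptn, pt0] using h0
  have hypt : Filter.Tendsto (fun j => y (ptn (φ j))) Filter.atTop (nhds (y pt0)) :=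
    (y.continuous.tendsto pt0).comp hpt
  refine le_of_forall_pos_le_add fun ε' hε' => ?_
  obtain ⟨N₁, hN₁⟩ := (Metric.tendsto_atTop.mp hSy) (ε'/2) (by positivity)
  obtain ⟨N₂, hN₂⟩ := (Metric.tendsto_atTop.mp hypt) (ε'/2) (by positivity)
  set j := max N₁ N₂
  set m := φ j with hm
  have e₁ : ‖S (bump m) - y‖ < ε'/2 := by
    have := hN₁ j (le_max_left _ _); rwa [dist_eq_norm] at this
  have e₂ : |y (ptn m) - y pt0| < ε'/2 := by
    have := hN₂ j (le_max_right _ _); rwa [Real.dist_eq] at this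
  have hA : V (bump m) pt0 = 0 := by
    rw [hV]; simp [pt0, Set.Ioc_self]
  have hB : V (bump m) (ptn m) = 1 := by
    rw [hV]; exact bump_integral m
  have a1 : |y pt0| ≤ ‖V (bump m) - y‖ := by
    have := (V (bump m) - y).norm_coe_le_norm pt0
    rwa [ContinuousMap.sub_apply, hA, Real.norm_eq_abs, zero_sub, abs_neg] at this
  have a2 : |1 - y (ptn m)| ≤ ‖V (bump m) - y‖ := by
    have := (V (bump m) - y).norm_coe_le_norm (ptn m)
    rwa [ContinuousMap.sub_apply, hB, Real.norm_eq_abs] at this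
  have b : ‖V (bump m) - y‖ ≤ ‖(V - S) (bump m)‖ + ‖S (bump m) - y‖ := by
    have : V (bump m) - y = (V - S) (bump m) + (S (bump m) - y) := by
      rw [ContinuousLinearMap.sub_apply]; abel
    rw [this]; exact norm_add_le _ _
  have c : ‖(V - S) (bump m)‖ ≤ ‖V - S‖ := by
    have := (V - S).le_opNorm (bump m)
    rwa [bump_norm, mul_one] at this
  have d : 1 ≤ |y pt0| + |1 - y (ptn m)| + |y (ptn m) - y pt0| := by
    have t1 := le_abs_self (y pt0)
    have t2 := le_abs_self (1 - y (ptn m))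
    have t3 := le_abs_self (y (ptn m) - y pt0)
    linarith
  linarith

/-- The essential norm of the Volterra operator
`V : L¹([0,1]) → C([0,1])`, `(Vf)(x) = ∫_0^x f`, equals `1/2`:
the infimum of `‖V - S‖` over all compact operators `S` is `1/2`. -/
theorem volterra_essentialNorm_eq_half
    (V : Lp ℝ 1 mu01 →L[ℝ] C(Icc (0:ℝ) 1, ℝ))
    (hV : ∀ (f : Lp ℝ 1 mu01) (x : Icc (0:ℝ) 1),
      V f x = ∫ t in Ioc (0:ℝ) (x:ℝ), (f : ℝ → ℝ) t ∂mu01) :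
    sInf {c : ℝ | ∃ S : Lp ℝ 1 mu01 →L[ℝ] C(Icc (0:ℝ) 1, ℝ),
      IsCompactOperator ⇑S ∧ c = ‖V - S‖} = 1/2 := by
  have hmem : (1/2 : ℝ) ∈ {c : ℝ | ∃ S : Lp ℝ 1 mu01 →L[ℝ] C(Icc (0:ℝ) 1, ℝ),
      IsCompactOperator ⇑S ∧ c = ‖V - S‖} :=
    ⟨S0, S0_compact, (le_antisymm (upper_bound V hV) (lower_bound V hV S0 S0_compact)).symm⟩
  refine le_antisymm (csInf_le ?_ hmem) (le_csInf ⟨1/2, hmem⟩ ?_)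
  · refine ⟨0, fun c hc => ?_⟩
    obtain ⟨S, -, rfl⟩ := hc
    exact norm_nonneg (V - S)
  · rintro c ⟨S, hSc, rfl⟩; exact lower_bound V hV S hSc
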